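/- Let α : ℝ → ℝ be given by α(t) = t − 1, and let w be a continuous bounded positive function on ℝ for which there exist constants M, δ, K₁, K₂ > 0 such that 1 < M − δ ≤ w(t) ≤ M for all t ≤ −K₁ and w(t) = 1 for all t ≥ K₂. Then the weighted composition operator T̃_{α,w} on C₀(ℝ), defined by T̃_{α,w}(f) = w·(f∘α), is topologically Cesàro hyper-transitive on C₀(ℝ). -/

import Mathlib

open scoped ZeroAtInfty
open Filter Metric Bornology

/-- Build a `C₀` function from a compactly supported continuous function. -/
noncomputable def mkC0 (f : ℝ → ℂ) (hf : Continuous f) (R : ℝ)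
    (hsupp : ∀ t, R ≤ |t| → f t = 0) : C₀(ℝ, ℂ) where
  toFun := f
  continuous_toFun := hf
  zero_at_infty' := by
    have hev : ∀ᶠ t in cocompact ℝ, f t = 0 := by
      rw [Filter.eventually_iff, Filter.mem_cocompact]
      refine ⟨closedBall 0 R, isCompact_closedBall _ _, fun t ht => ?_⟩
      simp only [Set.mem_compl_iff, mem_closedBall, Real.dist_eq, sub_zero, not_le] at ht
      exact hsupp t ht.le
    exact Tendsto.congr' (hev.mono fun t ht => ht.symm) tendsto_const_nhds

lemma mkC0_apply (f : ℝ → ℂ) (hf : Continuous f) (R : ℝ)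
    (hsupp : ∀ t, R ≤ |t| → f t = 0) (t : ℝ) : mkC0 f hf R hsupp t = f t := rfl

lemma C0_norm_le (f : C₀(ℝ, ℂ)) {C : ℝ} (hC : 0 ≤ C) (h : ∀ t, ‖f t‖ ≤ C) : ‖f‖ ≤ C := by
  rw [← ZeroAtInftyContinuousMap.norm_toBCF_eq_norm]
  exact (BoundedContinuousFunction.norm_le hC).2 h

lemma C0_decay (f : C₀(ℝ, ℂ)) {ε : ℝ} (hε : 0 < ε) :
    ∃ R, 0 < R ∧ ∀ t, R ≤ |t| → ‖f t‖ < ε := by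
  have h0 := zero_at_infty f
  have h1 := Metric.tendsto_nhds.mp h0 ε hε
  rw [Filter.eventually_iff, Filter.mem_cocompact] at h1
  obtain ⟨K, hK, hKs⟩ := h1
  obtain ⟨r, hr⟩ := hK.isBounded.subset_closedBall 0
  refine ⟨max r 0 + 1, by positivity, fun t ht => ?_⟩
  have : t ∉ closedBall (0:ℝ) r := by
    simp only [mem_closedBall, Real.dist_eq, sub_zero, not_le]
    have : r ≤ max r 0 := le_max_left _ _
    linarith
  have := hKs (fun h => this (hr h))
  simpa [dist_eq_norm] using this



lemma prod_weight_upper (w : ℝ → ℝ) (hw_pos : ∀ t, 0 < w t)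
    (K₂ : ℝ) (hhigh : ∀ t ≥ K₂, w t = 1)
    (C' : ℝ) (hC1 : 1 ≤ C') (hwC : ∀ t, w t ≤ C')
    (A : ℝ) (m : ℕ) (hm : A + K₂ ≤ m)
    (n : ℕ) (t : ℝ) (ht : -A ≤ t - n) :
    ∏ j ∈ Finset.range n, w (t - j) ≤ C' ^ m := by
  have step1 : ∏ j ∈ Finset.range n, w (t - j)
      ≤ ∏ j ∈ Finset.range n, (if t - (j:ℝ) < K₂ then C' else 1) := by
    apply Finset.prod_le_prod (fun j _ => (hw_pos _).le)
    intro j _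
    split_ifs with h
    · exact hwC _
    · exact le_of_eq (hhigh _ (not_lt.1 h))
  have step2 : ∏ j ∈ Finset.range n, (if t - (j:ℝ) < K₂ then C' else 1)
      = C' ^ (Finset.filter (fun j : ℕ => t - (j:ℝ) < K₂) (Finset.range n)).card := by
    rw [Finset.prod_ite, Finset.prod_const, Finset.prod_const, one_pow, mul_one]
  have hsub : Finset.filter (fun j : ℕ => t - (j:ℝ) < K₂) (Finset.range n)
      ⊆ Finset.Ico (n - m) n := by
    intro j hj
    simp only [Finset.mem_filter, Finset.mem_range] at hj
    obtain ⟨hjn, hjt⟩ := hj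
    simp only [Finset.mem_Ico]
    refine ⟨?_, hjn⟩
    rcases le_or_gt n m with h | h
    · omega
    · -- (j:ℝ) > t - K₂ ≥ n - A - K₂ ≥ n - m
      have h1 : (n:ℝ) - (m:ℝ) < (j:ℝ) := by
        have : (n:ℝ) - A ≤ t := by linarith
        linarith
      have h2 : (n:ℝ) < (j:ℝ) + (m:ℝ) := by linarith
      have : n < j + m := by exact_mod_cast h2
      omega
  have hcard : (Finset.filter (fun j : ℕ => t - (j:ℝ) < K₂) (Finset.range n)).card ≤ m := by
    have := Finset.card_le_card hsub
    rw [Nat.card_Ico] at this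
    omega
  calc ∏ j ∈ Finset.range n, w (t - j) ≤ _ := step1
    _ = _ := step2
    _ ≤ C' ^ m := pow_le_pow_right₀ hC1 hcard

lemma prod_weight_lower (w : ℝ → ℝ) (hw_pos : ∀ t, 0 < w t)
    (M δ K₁ : ℝ) (hMδ : 1 ≤ M - δ)
    (hlow : ∀ t ≤ -K₁, M - δ ≤ w t)
    (B : ℝ) (c : ℝ) (hc0 : 0 < c) (hc1 : c ≤ 1)
    (hc : ∀ s, -K₁ < s → s ≤ B → c ≤ w s)
    (m' : ℕ) (hm' : B + K₁ ≤ m')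
    (n : ℕ) (t : ℝ) (ht : t ≤ B) :
    (M - δ) ^ (n - m') * c ^ m' ≤ ∏ j ∈ Finset.range n, w (t - j) := by
  have step1 : ∏ j ∈ Finset.range n, (if t - (j:ℝ) ≤ -K₁ then M - δ else c)
      ≤ ∏ j ∈ Finset.range n, w (t - j) := by
    apply Finset.prod_le_prod
    · intro j _
      split_ifs
      · linarith
      · exact hc0.le
    · intro j _
      split_ifs with h
      · exact hlow _ h
      · exact hc _ (not_le.1 h) (by have : (0:ℝ) ≤ j := Nat.cast_nonneg j; linarith)
  set S := Finset.filter (fun j : ℕ => t - (j:ℝ) ≤ -K₁) (Finset.range n) with hS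
  have step2 : ∏ j ∈ Finset.range n, (if t - (j:ℝ) ≤ -K₁ then M - δ else c)
      = (M - δ) ^ S.card * c ^ (n - S.card) := by
    rw [Finset.prod_ite, Finset.prod_const, Finset.prod_const]
    congr 2
    have := Finset.card_filter_add_card_filter_not
      (s := Finset.range n) (p := fun j : ℕ => t - (j:ℝ) ≤ -K₁)
    rw [Finset.card_range, ← hS] at this
    simp only [not_le] at this ⊢
    omega
  have hsub : Finset.filter (fun j : ℕ => ¬ (t - (j:ℝ) ≤ -K₁)) (Finset.range n)
      ⊆ Finset.range m' := by
    intro j hj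
    simp only [Finset.mem_filter, Finset.mem_range, not_le] at hj ⊢
    obtain ⟨hjn, hjt⟩ := hj
    have h1 : (j:ℝ) < t + K₁ := by linarith
    have h2 : (j:ℝ) < (m':ℝ) := by linarith
    exact_mod_cast h2
  have hcard2 : n - S.card ≤ m' := by
    have := Finset.card_filter_add_card_filter_not
      (s := Finset.range n) (p := fun j : ℕ => t - (j:ℝ) ≤ -K₁)
    rw [Finset.card_range, ← hS] at this
    simp only [not_le] at this
    have h2 := Finset.card_le_card hsub
    simp only [not_le] at h2
    rw [Finset.card_range] at h2
    omega
  have hfac : (M - δ) ^ (n - m') * c ^ m' ≤ (M - δ) ^ S.card * c ^ (n - S.card) := by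
    apply mul_le_mul
    · exact pow_le_pow_right₀ hMδ (by omega)
    · exact pow_le_pow_of_le_one hc0.le hc1 hcard2
    · positivity
    · positivity
  calc (M - δ) ^ (n - m') * c ^ m' ≤ _ := hfac
    _ = _ := step2.symm
    _ ≤ _ := step1

lemma Tpow_apply (w : ℝ → ℝ) (T : C₀(ℝ, ℂ) →L[ℂ] C₀(ℝ, ℂ))
    (hT : ∀ (f : C₀(ℝ, ℂ)) (t : ℝ), T f t = (w t : ℂ) * f (t - 1)) :
    ∀ (n : ℕ) (f : C₀(ℝ, ℂ)) (t : ℝ),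
      (T ^ n) f t = ((∏ j ∈ Finset.range n, w (t - j) : ℝ) : ℂ) * f (t - n) := by
  intro n
  induction n with
  | zero => intro f t; simp
  | succ n ih =>
    intro f t
    rw [pow_succ']
    have h0 : (T * T ^ n) f = T ((T ^ n) f) := rfl
    rw [h0, hT, ih, Finset.prod_range_succ']
    push_cast
    rw [show t - ((n : ℝ) + 1) = t - 1 - (n : ℝ) by ring, sub_zero]
    have hprod : ∀ i ∈ Finset.range n, ((w (t - 1 - (i:ℝ))) : ℂ) = ((w (t - ((i:ℝ) + 1))) : ℂ) := by
      intro i _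
      norm_num
      ring_nf
    rw [Finset.prod_congr rfl hprod]
    ring
noncomputable def cutfun (R t : ℝ) : ℝ := min 1 (max 0 (R + 1 - |t|))

lemma cutfun_nonneg (R t : ℝ) : 0 ≤ cutfun R t :=
  le_min zero_le_one (le_max_left _ _)

lemma cutfun_le_one (R t : ℝ) : cutfun R t ≤ 1 := min_le_left _ _

lemma cutfun_eq_one (R t : ℝ) (h : |t| ≤ R) : cutfun R t = 1 := by
  unfold cutfun
  rw [max_eq_right (by linarith), min_eq_left (by linarith)]

lemma cutfun_eq_zero (R t : ℝ) (h : R + 1 ≤ |t|) : cutfun R t = 0 := by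
  unfold cutfun
  rw [max_eq_left (by linarith), min_eq_right zero_le_one]

lemma cutfun_continuous (R : ℝ) : Continuous (cutfun R) :=
  continuous_const.min (continuous_const.max (continuous_const.sub continuous_abs))

noncomputable def cut (f : C₀(ℝ, ℂ)) (R : ℝ) : C₀(ℝ, ℂ) :=
  mkC0 (fun t => (cutfun R t : ℂ) * f t)
    ((Complex.continuous_ofReal.comp (cutfun_continuous R)).mul
      (map_continuous f))
    (R + 1)
    (fun t ht => by rw [cutfun_eq_zero R t ht]; simp)

lemma cut_apply (f : C₀(ℝ, ℂ)) (R t : ℝ) : cut f R t = (cutfun R t : ℂ) * f t := rfl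

lemma cut_supp (f : C₀(ℝ, ℂ)) (R t : ℝ) (h : R + 1 ≤ |t|) : cut f R t = 0 := by
  rw [cut_apply, cutfun_eq_zero R t h]; simp

lemma cut_norm_apply_le (f : C₀(ℝ, ℂ)) (R t : ℝ) : ‖cut f R t‖ ≤ ‖f t‖ := by
  rw [cut_apply, norm_mul]
  have h1 : ‖((cutfun R t : ℝ) : ℂ)‖ ≤ 1 := by
    rw [Complex.norm_real, Real.norm_eq_abs, abs_of_nonneg (cutfun_nonneg R t)]
    exact cutfun_le_one R t
  nlinarith [norm_nonneg (f t)]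

lemma cut_sub_apply_le (f : C₀(ℝ, ℂ)) (R t : ℝ) : ‖f t - cut f R t‖ ≤ ‖f t‖ := by
  rw [cut_apply]
  have : f t - (cutfun R t : ℂ) * f t = ((1 - cutfun R t : ℝ) : ℂ) * f t := by
    push_cast; ring
  rw [this, norm_mul]
  have h1 : ‖((1 - cutfun R t : ℝ) : ℂ)‖ ≤ 1 := by
    rw [Complex.norm_real, Real.norm_eq_abs, abs_of_nonneg (by linarith [cutfun_le_one R t])]
    linarith [cutfun_nonneg R t]
  nlinarith [norm_nonneg (f t)]

lemma cut_sub_eq_zero (f : C₀(ℝ, ℂ)) (R t : ℝ) (h : |t| ≤ R) : f t - cut f R t = 0 := by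
  rw [cut_apply, cutfun_eq_one R t h]; simp

lemma C0_apply_norm_le (f : C₀(ℝ, ℂ)) (t : ℝ) : ‖f t‖ ≤ ‖f‖ := by
  rw [← ZeroAtInftyContinuousMap.norm_toBCF_eq_norm]
  exact BoundedContinuousFunction.norm_coe_le_norm f.toBCF t
/-- A bounded linear operator `T` on a normed space is *topologically Cesàro
hyper-transitive* if for every pair of nonempty open subsets `O₁, O₂` there exists a
strictly increasing sequence `(n_k)` of (positive) natural numbers such that
`n_k⁻¹ • T^{n_k}(O₁) ∩ O₂ ≠ ∅` for all `k`. -/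
def IsCesaroHyperTransitive {E : Type*} [NormedAddCommGroup E] [NormedSpace ℂ E]
    (T : E →L[ℂ] E) : Prop :=
  ∀ O₁ O₂ : Set E, IsOpen O₁ → IsOpen O₂ → O₁.Nonempty → O₂.Nonempty →
    ∃ n : ℕ → ℕ, StrictMono n ∧ (∀ k, 1 ≤ n k) ∧
      ∀ k, ∃ f ∈ O₁, ((n k : ℂ))⁻¹ • (T ^ n k) f ∈ O₂

theorem cesaro_hyper_transitive_of_weight
    (w : ℝ → ℝ) (hw_cont : Continuous w) (hw_pos : ∀ t, 0 < w t)
    (hw_bdd : ∃ C, ∀ t, w t ≤ C)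
    (M δ K₁ K₂ : ℝ) (hM : 0 < M) (hδ : 0 < δ) (hK₁ : 0 < K₁) (hK₂ : 0 < K₂)
    (hMδ : 1 < M - δ)
    (hlow : ∀ t ≤ -K₁, M - δ ≤ w t ∧ w t ≤ M)
    (hhigh : ∀ t ≥ K₂, w t = 1)
    (T : C₀(ℝ, ℂ) →L[ℂ] C₀(ℝ, ℂ))
    (hT : ∀ (f : C₀(ℝ, ℂ)) (t : ℝ), T f t = (w t : ℂ) * f (t - 1)) :
    IsCesaroHyperTransitive T := by
  obtain ⟨C, hwC⟩ := hw_bdd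
  set C' := max C 1 with hC'def
  have hC'1 : 1 ≤ C' := le_max_right _ _
  have hwC' : ∀ t, w t ≤ C' := fun t => le_trans (hwC t) (le_max_left _ _)
  intro O₁ O₂ hO₁ hO₂ hne₁ hne₂
  obtain ⟨f₁, hf₁⟩ := hne₁
  obtain ⟨g₁, hg₁⟩ := hne₂
  obtain ⟨ε₁, hε₁, hball₁⟩ := Metric.isOpen_iff.mp hO₁ f₁ hf₁
  obtain ⟨ε₂, hε₂, hball₂⟩ := Metric.isOpen_iff.mp hO₂ g₁ hg₁
  obtain ⟨R₁, hR₁pos, hR₁⟩ := C0_decay f₁ (show (0:ℝ) < ε₁/2 by linarith)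
  obtain ⟨R₂, hR₂pos, hR₂⟩ := C0_decay g₁ (show (0:ℝ) < ε₂/2 by linarith)
  set f' := cut f₁ R₁ with hf'def
  set g := cut g₁ R₂ with hgdef
  set A := R₁ + 1 with hAdef
  set B := R₂ + 1 with hBdef
  -- distances to the truncations
  have hdist₁ : ‖f₁ - f'‖ ≤ ε₁ / 2 := by
    apply C0_norm_le _ (by linarith)
    intro t
    rw [ZeroAtInftyContinuousMap.sub_apply]
    rcases le_or_gt |t| R₁ with h | h
    · rw [cut_sub_eq_zero f₁ R₁ t h, norm_zero]; linarith
    · exact le_trans (cut_sub_apply_le f₁ R₁ t) (hR₁ t h.le).le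
  have hdist₂ : ‖g₁ - g‖ ≤ ε₂ / 2 := by
    apply C0_norm_le _ (by linarith)
    intro t
    rw [ZeroAtInftyContinuousMap.sub_apply]
    rcases le_or_gt |t| R₂ with h | h
    · rw [cut_sub_eq_zero g₁ R₂ t h, norm_zero]; linarith
    · exact le_trans (cut_sub_apply_le g₁ R₂ t) (hR₂ t h.le).le
  -- constants
  set m : ℕ := ⌈A + K₂⌉₊ with hmdef
  have hm : A + K₂ ≤ (m:ℝ) := Nat.le_ceil _
  set m' : ℕ := ⌈B + K₁⌉₊ with hm'def
  have hm' : B + K₁ ≤ (m':ℝ) := Nat.le_ceil _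
  -- minimum of w on [-K₁, B]
  have hKB : -K₁ ≤ B := by
    have hBpos : (0:ℝ) < B := by rw [hBdef]; linarith
    linarith
  obtain ⟨s₀, hs₀mem, hs₀min⟩ := isCompact_Icc.exists_isMinOn
    (Set.nonempty_Icc.mpr hKB) hw_cont.continuousOn
  set c := min (w s₀) 1 with hcdef
  have hc0 : 0 < c := lt_min (hw_pos s₀) one_pos
  have hc1 : c ≤ 1 := min_le_right _ _
  have hc : ∀ s, -K₁ < s → s ≤ B → c ≤ w s := fun s h1 h2 =>
    le_trans (min_le_left _ _) (hs₀min ⟨h1.le, h2⟩)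
  have hMδ0 : (0:ℝ) < M - δ := by linarith
  -- positivity of the weight products
  have hWpos : ∀ (n : ℕ) (t : ℝ), 0 < ∏ j ∈ Finset.range n, w (t - j) :=
    fun n t => Finset.prod_pos (fun j _ => hw_pos _)
  -- the corrector functions
  have hhc : ∀ n : ℕ, Continuous (fun u : ℝ =>
      (n:ℂ) * g (u + n) / ((∏ j ∈ Finset.range n, w (u + n - j) : ℝ) : ℂ)) := by
    intro n
    apply Continuous.div
    · exact continuous_const.mul ((map_continuous g).comp (continuous_id.add continuous_const))
    · apply Complex.continuous_ofReal.comp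
      apply continuous_finset_prod
      intro j _
      exact hw_cont.comp ((continuous_id.add continuous_const).sub continuous_const)
    · intro u
      exact Complex.ofReal_ne_zero.mpr (hWpos n (u + n)).ne'
  have hhsupp : ∀ (n : ℕ) (u : ℝ), B + 1 + n ≤ |u| →
      (n:ℂ) * g (u + n) / ((∏ j ∈ Finset.range n, w (u + n - j) : ℝ) : ℂ) = 0 := by
    intro n u hu
    have habs : B + 1 ≤ |u + n| := by
      have h1 : |u| ≤ |u + n| + n := by
        calc |u| = |(u + n) + (-(n:ℝ))| := by ring_nf
          _ ≤ |u + n| + |(-(n:ℝ))| := abs_add_le _ _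
          _ = |u + n| + n := by rw [abs_neg, Nat.abs_cast]
      linarith
    have : g (u + n) = 0 := cut_supp g₁ R₂ (u + n) (by rw [hBdef] at habs; linarith)
    rw [this]
    simp
  set h : ℕ → C₀(ℝ, ℂ) := fun n => mkC0 _ (hhc n) (B + 1 + n) (hhsupp n) with hhdef
  have happly : ∀ (n : ℕ) (u : ℝ), h n u = (n:ℂ) * g (u + n)
      / ((∏ j ∈ Finset.range n, w (u + n - j) : ℝ) : ℂ) := fun n u => rfl
  have hf'supp : ∀ t : ℝ, R₁ + 1 ≤ |t| → f' t = 0 := cut_supp f₁ R₁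
  have hgsupp : ∀ t : ℝ, R₂ + 1 ≤ |t| → g t = 0 := cut_supp g₁ R₂
  clear_value h f' g A B m m' c C'
  have hL : ∀ n : ℕ, (0:ℝ) < (M - δ) ^ (n - m') * c ^ m' :=
    fun n => mul_pos (pow_pos hMδ0 _) (pow_pos hc0 _)
  have hC'0 : (0:ℝ) < C' := by linarith
  -- key identity : (T ^ n) (h n) = n • g
  have hkey : ∀ (n : ℕ) (t : ℝ), (T ^ n) (h n) t = (n:ℂ) * g t := by
    intro n t
    rw [Tpow_apply w T hT n]
    rw [happly n (t - n), sub_add_cancel]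
    push_cast
    rw [mul_comm, div_mul_cancel₀ _
      (Finset.prod_ne_zero_iff.mpr fun j _ => Complex.ofReal_ne_zero.mpr (hw_pos _).ne')]
  -- norm bounds
  have hTf' : ∀ n : ℕ, ‖(T ^ n) f'‖ ≤ C' ^ m * ‖f'‖ := by
    intro n
    apply C0_norm_le _ (mul_nonneg (pow_nonneg hC'0.le m) (norm_nonneg _))
    intro t
    rw [Tpow_apply w T hT n, norm_mul, Complex.norm_real, Real.norm_eq_abs,
      abs_of_pos (hWpos n t)]
    by_cases h0 : f' (t - n) = 0
    · rw [h0, norm_zero, mul_zero]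
      exact mul_nonneg (pow_nonneg hC'0.le m) (norm_nonneg _)
    · have hA : -A ≤ t - n := by
        by_contra hcon
        push_neg at hcon
        have hApos : (0:ℝ) < A := by rw [hAdef]; linarith
        have habs : R₁ + 1 ≤ |t - (n:ℝ)| := by
          rw [abs_of_neg (by linarith : t - (n:ℝ) < 0)]
          rw [hAdef] at hcon
          linarith
        exact h0 (hf'supp (t - n) habs)
      have h1 := prod_weight_upper w hw_pos K₂ hhigh C' hC'1 hwC' A m hm n t hA
      exact mul_le_mul h1 (C0_apply_norm_le f' (t - n)) (norm_nonneg _)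
        (pow_nonneg hC'0.le m)
  have hhn : ∀ n : ℕ, ‖h n‖ ≤ (n:ℝ) * ‖g‖ / ((M - δ) ^ (n - m') * c ^ m') := by
    intro n
    apply C0_norm_le _ (div_nonneg (by positivity) (hL n).le)
    intro u
    rw [happly n u]
    by_cases h0 : g (u + n) = 0
    · rw [h0]
      simp only [mul_zero, zero_mul, zero_div, norm_zero]
      exact div_nonneg (by positivity) (hL n).le
    · have hB : u + n ≤ B := by
        by_contra hcon
        push_neg at hcon
        have hBpos : (0:ℝ) < B := by rw [hBdef]; linarith
        have habs : R₂ + 1 ≤ |u + (n:ℝ)| := by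
          rw [abs_of_pos (by linarith : (0:ℝ) < u + (n:ℝ))]
          rw [hBdef] at hcon
          linarith
        exact h0 (hgsupp (u + n) habs)
      have hlb := prod_weight_lower w hw_pos M δ K₁ hMδ.le (fun t ht => (hlow t ht).1)
        B c hc0 hc1 hc m' hm' n (u + n) hB
      rw [norm_div, norm_mul, Complex.norm_natCast, Complex.norm_real, Real.norm_eq_abs,
        abs_of_pos (hWpos n (u + n))]
      apply div_le_div₀ (by positivity)
        (mul_le_mul_of_nonneg_left (C0_apply_norm_le g (u + n)) (Nat.cast_nonneg n))
        (hL n) hlb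
  -- eventual smallness
  have hr0 : (0:ℝ) ≤ (M - δ)⁻¹ := (inv_pos.mpr hMδ0).le
  have hr1 : (M - δ)⁻¹ < 1 := inv_lt_one_of_one_lt₀ hMδ
  have htend1 : Filter.Tendsto (fun n : ℕ => (n:ℝ) * ‖g‖ / ((M - δ) ^ (n - m') * c ^ m'))
      Filter.atTop (nhds 0) := by
    have heq : ∀ n ≥ m', (n:ℝ) * ‖g‖ / ((M - δ) ^ (n - m') * c ^ m')
        = (‖g‖ * (M - δ) ^ m' / c ^ m') * ((n:ℝ) * ((M - δ)⁻¹) ^ n) := by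
      intro n hn
      have h2 : ((M - δ):ℝ) ^ n ≠ 0 := (pow_pos hMδ0 n).ne'
      have h4 : ((M - δ):ℝ) ^ m' ≠ 0 := (pow_pos hMδ0 m').ne'
      have h3 : (c:ℝ) ^ m' ≠ 0 := (pow_pos hc0 m').ne'
      have key : ((M - δ):ℝ) ^ (n - m') = (M - δ) ^ n * ((M - δ) ^ m')⁻¹ :=
        pow_sub₀ _ hMδ0.ne' hn
      rw [inv_pow, key]
      field_simp
    have hbase : Filter.Tendsto (fun n : ℕ =>
        (‖g‖ * (M - δ) ^ m' / c ^ m') * ((n:ℝ) * ((M - δ)⁻¹) ^ n)) Filter.atTop (nhds 0) := by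
      have := (tendsto_self_mul_const_pow_of_lt_one hr0 hr1).const_mul
        (‖g‖ * (M - δ) ^ m' / c ^ m')
      simpa using this
    apply hbase.congr'
    filter_upwards [Filter.eventually_ge_atTop m'] with n hn
    exact (heq n hn).symm
  have hE1 : ∀ᶠ n : ℕ in Filter.atTop,
      (n:ℝ) * ‖g‖ / ((M - δ) ^ (n - m') * c ^ m') < ε₁ / 2 :=
    htend1.eventually_lt_const (by linarith)
  have hE2 : ∀ᶠ n : ℕ in Filter.atTop, C' ^ m * ‖f'‖ / (n:ℝ) < ε₂ / 2 :=
    (tendsto_const_div_atTop_nhds_zero_nat (C' ^ m * ‖f'‖)).eventually_lt_const (by linarith)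
  obtain ⟨N, hN⟩ := Filter.eventually_atTop.mp (hE1.and hE2)
  -- the sequence
  refine ⟨fun k => N + 1 + k, ?_, ?_, ?_⟩
  · intro a b hab
    show N + 1 + a < N + 1 + b
    omega
  · intro k
    show 1 ≤ N + 1 + k
    omega
  intro k
  set n := N + 1 + k with hndef
  have hn1 : 1 ≤ n := by omega
  have hnN : N ≤ n := by omega
  obtain ⟨hsmall₁, hsmall₂⟩ := hN n hnN
  have hnR : (0:ℝ) < n := by exact_mod_cast hn1
  have hnC : (n:ℂ) ≠ 0 := Nat.cast_ne_zero.mpr (by omega)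
  refine ⟨f' + h n, ?_, ?_⟩
  · apply hball₁
    rw [Metric.mem_ball, dist_eq_norm]
    have : f' + h n - f₁ = -(f₁ - f') + h n := by abel
    rw [this]
    calc ‖-(f₁ - f') + h n‖ ≤ ‖-(f₁ - f')‖ + ‖h n‖ := norm_add_le _ _
      _ = ‖f₁ - f'‖ + ‖h n‖ := by rw [norm_neg]
      _ < ε₁ / 2 + ε₁ / 2 := by
          have := hhn n
          apply add_lt_add_of_le_of_lt hdist₁ (lt_of_le_of_lt this hsmall₁)
      _ = ε₁ := by ring
  · apply hball₂
    rw [Metric.mem_ball, dist_eq_norm]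
    set X := (n:ℂ)⁻¹ • ((T ^ n) (f' + h n)) with hXdef
    have hadd : ∀ t : ℝ, (T ^ n) (f' + h n) t = (T ^ n) f' t + (n:ℂ) * g t := by
      intro t
      rw [← hkey n t, Tpow_apply w T hT n, Tpow_apply w T hT n, Tpow_apply w T hT n,
        ZeroAtInftyContinuousMap.add_apply]
      ring
    have hXg : ‖X - g‖ ≤ C' ^ m * ‖f'‖ / (n:ℝ) := by
      apply C0_norm_le _ (div_nonneg (mul_nonneg (pow_nonneg hC'0.le m) (norm_nonneg _)) hnR.le)
      intro t
      rw [ZeroAtInftyContinuousMap.sub_apply, hXdef, ZeroAtInftyContinuousMap.smul_apply,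
        hadd t, smul_eq_mul]
      have hval : (n:ℂ)⁻¹ * ((T ^ n) f' t + (n:ℂ) * g t) - g t = (n:ℂ)⁻¹ * (T ^ n) f' t := by
        field_simp
        ring
      rw [hval, norm_mul, norm_inv, Complex.norm_natCast]
      have hFt : ‖(T ^ n) f' t‖ ≤ C' ^ m * ‖f'‖ :=
        le_trans (C0_apply_norm_le _ t) (hTf' n)
      rw [div_eq_inv_mul]
      exact mul_le_mul_of_nonneg_left hFt (by positivity)
    have hsplit : X - g₁ = (X - g) + -(g₁ - g) := by abel
    rw [hsplit]
    calc ‖(X - g) + -(g₁ - g)‖ ≤ ‖X - g‖ + ‖-(g₁ - g)‖ := norm_add_le _ _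
      _ = ‖X - g‖ + ‖g₁ - g‖ := by rw [norm_neg]
      _ < ε₂ / 2 + ε₂ / 2 := add_lt_add_of_lt_of_le (lt_of_le_of_lt hXg hsmall₂) hdist₂
      _ = ε₂ := by ring
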